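/- Let d(l,n) := 1 - n!/(n^l(n-l)!), and D(η,n) := ∑_{l=0}^n C(n,l) η^l (1-η)^{n-l} d(l,n). Then for every δ ∈ (0,1], D(η,n) ≥ d(⌈ηn(1-δ)⌉, n) · (1 - exp(-δ²ηn/2)). -/
import Mathlib


/-- `dsep l n = 1 - n!/(n^l (n-l)!)`. -/
noncomputable def dsep (l n : ℕ) : ℝ :=
  1 - (Nat.factorial n : ℝ) / ((n : ℝ) ^ l * (Nat.factorial (n - l) : ℝ))

/-- The binomial average `D(η,n)` of `dsep`. -/
noncomputable def Dsep (η : ℝ) (n : ℕ) : ℝ :=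
  ∑ l ∈ Finset.range (n + 1),
    (Nat.choose n l : ℝ) * η ^ l * (1 - η) ^ (n - l) * dsep l n

lemma denom_mono (n : ℕ) : ∀ k l : ℕ, k ≤ l → l ≤ n →
    n ^ k * Nat.factorial (n - k) ≤ n ^ l * Nat.factorial (n - l) := by
  intro k l hkl
  induction l, hkl using Nat.le_induction with
  | base => intro _; exact le_rfl
  | succ l hkl ih =>
    intro hln
    have hln' : l ≤ n := le_trans (Nat.le_succ l) hln
    refine le_trans (ih hln') ?_
    have h1 : n - l = (n - (l + 1)) + 1 := by omega
    rw [h1, Nat.factorial_succ, pow_succ]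
    have h2 : n - (l + 1) + 1 ≤ n := by omega
    calc n ^ l * ((n - (l + 1) + 1) * Nat.factorial (n - (l + 1)))
        ≤ n ^ l * (n * Nat.factorial (n - (l + 1))) := by
          exact Nat.mul_le_mul_left _ (Nat.mul_le_mul_right _ h2)
      _ = n ^ l * n * Nat.factorial (n - (l + 1)) := by ring

lemma dsep_mono (n : ℕ) (hn : 1 ≤ n) {k l : ℕ} (hkl : k ≤ l) (hln : l ≤ n) :
    dsep k n ≤ dsep l n := by
  unfold dsep
  have hfac : ∀ m : ℕ, (0:ℝ) < (n:ℝ) ^ m * Nat.factorial (n - m) := by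
    intro m
    have hn' : (0:ℝ) < n := by exact_mod_cast hn
    positivity
  have h := denom_mono n k l hkl hln
  have h' : ((n:ℝ) ^ k * Nat.factorial (n - k)) ≤ (n:ℝ) ^ l * Nat.factorial (n - l) := by
    exact_mod_cast h
  have := div_le_div_of_nonneg_left (by positivity : (0:ℝ) ≤ Nat.factorial n) (hfac k) h'
  linarith

lemma dsep_nonneg (n : ℕ) (hn : 1 ≤ n) {l : ℕ} (hln : l ≤ n) : 0 ≤ dsep l n := by
  have h0 : dsep 0 n = 0 := by
    unfold dsep
    rw [pow_zero, Nat.sub_zero, one_mul]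
    rw [div_self (by exact_mod_cast (Nat.factorial_pos n).ne')]
    ring
  have := dsep_mono n hn (Nat.zero_le l) hln
  linarith

theorem Dsep_lower_bound (n : ℕ) (hn : 1 ≤ n) (η δ : ℝ)
    (hη0 : 0 ≤ η) (hη1 : η ≤ 1) (hδ0 : 0 < δ) (hδ1 : δ ≤ 1) :
    Dsep η n ≥ dsep ⌈η * n * (1 - δ)⌉₊ n * (1 - Real.exp (-(δ ^ 2 * η * n) / 2)) := by
  set a : ℝ := η * n * (1 - δ) with ha
  set k : ℕ := ⌈a⌉₊ with hk
  have hδ' : (0:ℝ) ≤ 1 - δ := by linarith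
  have hncast : (0:ℝ) ≤ (n:ℝ) := Nat.cast_nonneg n
  have hkn : k ≤ n := by
    rw [hk, Nat.ceil_le]
    calc a = (η * (1 - δ)) * n := by rw [ha]; ring
      _ ≤ 1 * n := by
          apply mul_le_mul_of_nonneg_right _ hncast
          nlinarith
      _ = n := one_mul _
  have hd0 : 0 ≤ dsep k n := dsep_nonneg n hn hkn
  set p : ℕ → ℝ := fun l => (Nat.choose n l : ℝ) * η ^ l * (1 - η) ^ (n - l) with hp
  have hpnn : ∀ l, 0 ≤ p l := by
    intro l; rw [hp]; dsimp only
    have h1 : (0:ℝ) ≤ 1 - η := by linarith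
    positivity
  have hsum1 : ∑ l ∈ Finset.range (n + 1), p l = 1 := by
    have h : (η + (1 - η)) ^ n
        = ∑ l ∈ Finset.range (n + 1), η ^ l * (1 - η) ^ (n - l) * (Nat.choose n l : ℝ) :=
      add_pow η (1 - η) n
    have h2 : η + (1 - η) = 1 := by ring
    rw [h2, one_pow] at h
    calc ∑ l ∈ Finset.range (n + 1), p l
        = ∑ l ∈ Finset.range (n + 1), η ^ l * (1 - η) ^ (n - l) * (Nat.choose n l : ℝ) := by
          apply Finset.sum_congr rfl; intro l _; rw [hp]; ring
      _ = 1 := h.symm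
  have hchernoff : ∑ l ∈ Finset.range k, p l ≤ Real.exp (-(δ ^ 2 * η * n) / 2) := by
    rcases Nat.eq_zero_or_pos k with hk0 | hk1
    · rw [hk0]; simp; exact (Real.exp_pos _).le
    · have ha0 : 0 < a := by
        by_contra h; push_neg at h
        have : k = 0 := by rw [hk]; exact Nat.ceil_eq_zero.mpr h
        omega
      have hδlt : δ < 1 := by
        by_contra h; push_neg at h
        have h1 : 1 - δ ≤ 0 := by linarith
        have : a ≤ 0 := by
          rw [ha]
          have : 0 ≤ η * n := mul_nonneg hη0 hncast
          nlinarith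
        linarith
      have h1δ : 0 < 1 - δ := by linarith
      set t : ℝ := -Real.log (1 - δ) with ht
      have ht0 : 0 < t := by
        rw [ht]
        have := Real.log_neg h1δ (by linarith)
        linarith
      have hexpt : Real.exp (-t) = 1 - δ := by
        rw [ht, neg_neg, Real.exp_log h1δ]
      have stepA : ∑ l ∈ Finset.range k, p l
          ≤ ∑ l ∈ Finset.range k, p l * Real.exp (t * (a - l)) := by
        apply Finset.sum_le_sum; intro l hl
        have hla : (l:ℝ) ≤ a := by
          rw [Finset.mem_range] at hl
          have h1 : (l:ℝ) + 1 ≤ (k:ℝ) := by exact_mod_cast hl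
          have h2 : (k:ℝ) < a + 1 := by
            rw [hk]; exact Nat.ceil_lt_add_one ha0.le
          linarith
        have h1 : 1 ≤ Real.exp (t * (a - l)) :=
          Real.one_le_exp (by nlinarith)
        nlinarith [hpnn l]
      have stepB : ∑ l ∈ Finset.range k, p l * Real.exp (t * (a - l))
          ≤ ∑ l ∈ Finset.range (n + 1), p l * Real.exp (t * (a - l)) := by
        apply Finset.sum_le_sum_of_subset_of_nonneg
        · exact Finset.range_subset_range.mpr (by omega)
        · intro l _ _; exact mul_nonneg (hpnn l) (Real.exp_pos _).le
      have stepC : ∑ l ∈ Finset.range (n + 1), p l * Real.exp (t * (a - l))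
          = Real.exp (t * a) * (η * (1 - δ) + (1 - η)) ^ n := by
        rw [add_pow, Finset.mul_sum]
        apply Finset.sum_congr rfl
        intro l _
        have he : Real.exp (t * (a - l)) = Real.exp (t * a) * Real.exp (-t) ^ l := by
          rw [← Real.exp_nat_mul, ← Real.exp_add]
          congr 1; ring
        rw [hp]; dsimp only
        rw [he, hexpt, mul_pow]; ring
      have h1ηδ : (0:ℝ) ≤ 1 - η * δ := by nlinarith
      have hbase : η * (1 - δ) + (1 - η) = 1 - η * δ := by ring
      have stepD : (1 - η * δ) ^ n ≤ Real.exp ((n:ℝ) * (-(η * δ))) := by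
        have h1 : 1 - η * δ ≤ Real.exp (-(η * δ)) := by
          have := Real.add_one_le_exp (-(η * δ)); linarith
        calc (1 - η * δ) ^ n ≤ Real.exp (-(η * δ)) ^ n := pow_le_pow_left₀ h1ηδ h1 n
          _ = Real.exp ((n:ℝ) * (-(η * δ))) := (Real.exp_nat_mul _ n).symm
      have hsinh : t < Real.sinh t := Real.self_lt_sinh_iff.mpr ht0
      have hme : Real.exp (-t) * Real.exp t = 1 := by
        rw [← Real.exp_add]; simp
      have key : t * (1 - δ) ≤ δ - δ ^ 2 / 2 := by
        have hsinh' : t < (Real.exp t - Real.exp (-t)) / 2 := by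
          rw [← Real.sinh_eq]; exact hsinh
        have hpos : 0 < Real.exp (-t) := Real.exp_pos _
        have h2 : Real.exp (-t) * t < Real.exp (-t) * ((Real.exp t - Real.exp (-t)) / 2) :=
          mul_lt_mul_of_pos_left hsinh' hpos
        rw [hexpt] at h2 hme
        nlinarith
      have hexpo : t * a + (n:ℝ) * (-(η * δ)) ≤ -(δ ^ 2 * η * n) / 2 := by
        have hηn : 0 ≤ η * n := mul_nonneg hη0 hncast
        have e1 : t * a + (n:ℝ) * (-(η * δ)) = (η * n) * (t * (1 - δ) - δ) := by
          rw [ha]; ring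
        have e2 : -(δ ^ 2 * η * n) / 2 = (η * n) * (-(δ ^ 2) / 2) := by ring
        rw [e1, e2]
        apply mul_le_mul_of_nonneg_left _ hηn
        linarith
      calc ∑ l ∈ Finset.range k, p l
          ≤ ∑ l ∈ Finset.range (n + 1), p l * Real.exp (t * (a - l)) := le_trans stepA stepB
        _ = Real.exp (t * a) * (1 - η * δ) ^ n := by rw [stepC, hbase]
        _ ≤ Real.exp (t * a) * Real.exp ((n:ℝ) * (-(η * δ))) :=
            mul_le_mul_of_nonneg_left stepD (Real.exp_pos _).le
        _ = Real.exp (t * a + (n:ℝ) * (-(η * δ))) := (Real.exp_add _ _).symm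
        _ ≤ Real.exp (-(δ ^ 2 * η * n) / 2) := Real.exp_le_exp.mpr hexpo
  have hsplit : ∑ l ∈ Finset.range k, p l + ∑ l ∈ Finset.Ico k (n + 1), p l = 1 := by
    rw [Finset.range_eq_Ico] at hsum1 ⊢
    rw [Finset.sum_Ico_consecutive _ (Nat.zero_le k) (by omega : k ≤ n + 1)]
    exact hsum1
  have hlower : dsep k n * ∑ l ∈ Finset.Ico k (n + 1), p l ≤ Dsep η n := by
    have h1 : Dsep η n = ∑ l ∈ Finset.range (n + 1), p l * dsep l n := rfl
    rw [h1, Finset.range_eq_Ico,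
      ← Finset.sum_Ico_consecutive (fun l => p l * dsep l n) (Nat.zero_le k)
        (by omega : k ≤ n + 1)]
    have h2 : 0 ≤ ∑ l ∈ Finset.Ico 0 k, p l * dsep l n := by
      apply Finset.sum_nonneg; intro l hl
      rw [Finset.mem_Ico] at hl
      exact mul_nonneg (hpnn l) (dsep_nonneg n hn (by omega))
    have h3 : dsep k n * ∑ l ∈ Finset.Ico k (n + 1), p l
        ≤ ∑ l ∈ Finset.Ico k (n + 1), p l * dsep l n := by
      rw [Finset.mul_sum]
      apply Finset.sum_le_sum; intro l hl
      rw [Finset.mem_Ico] at hl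
      have hm := dsep_mono n hn hl.1 (by omega : l ≤ n)
      have hpl := hpnn l
      nlinarith
    linarith
  have hfin : dsep k n * (1 - Real.exp (-(δ ^ 2 * η * n) / 2))
      ≤ dsep k n * ∑ l ∈ Finset.Ico k (n + 1), p l := by
    apply mul_le_mul_of_nonneg_left _ hd0
    have h4 : ∑ l ∈ Finset.Ico k (n + 1), p l = 1 - ∑ l ∈ Finset.range k, p l := by
      linarith
    rw [h4]; linarith
  exact le_trans hfin hlower
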